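/- arXiv:1809.06627 — 3 statements merged into one kernel-verified Lean document; each statement's English description precedes it below -/
import Mathlib

section
/- Let a, b, e, f, p ∈ ℚ with √p irrational, e + f√p > 0, a + b√p > 0, and suppose either (a) a - b√p > 0 and |f|/e > |b|/a, or (b) a - b√p < 0 and |e|/f > |a|/b. Set A = f, B = -e, C = 2fa²/b² - pf. Then for every rectangle (α + β√p) × (γ + δ√p) with α, β, γ, δ ∈ ℚ, (α + β√p) > 0, and ratio of sides (γ + δ√p)/(α + β√p) = a + b√p, the ABC-area is nonzero, and its sign is the same for all such rectangles (it equals the sign of fa - eb). -/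
set_option maxHeartbeats 1000000 in
/-- Main lemma, part 2: under condition (a) or (b), for every rectangle
(α + β√p) × (γ + δ√p) with positive first side and side ratio a + b√p, the ABC-area
(with A = f, B = -e, C = 2fa²/b² - pf) is nonzero and its sign equals the sign of fa - eb. -/
theorem abc_area_sign_constant
    (a b e f p : ℚ) (hp : 0 < p) (hirr : Irrational (Real.sqrt p)) (hb : b ≠ 0)
    (hef : (e : ℝ) + (f : ℝ) * Real.sqrt p > 0)
    (hab : (a : ℝ) + (b : ℝ) * Real.sqrt p > 0)
    (hcase :
      ((a : ℝ) - (b : ℝ) * Real.sqrt p > 0 ∧ |f| / e > |b| / a) ∨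
      ((a : ℝ) - (b : ℝ) * Real.sqrt p < 0 ∧ |e| / f > |a| / b))
    (A B C : ℝ) (hA : A = (f : ℝ)) (hB : B = -(e : ℝ))
    (hC : C = 2 * (f : ℝ) * (a : ℝ) ^ 2 / (b : ℝ) ^ 2 - (p : ℝ) * (f : ℝ)) :
    ∀ α β γ δ : ℚ, (α : ℝ) + (β : ℝ) * Real.sqrt p > 0 →
      ((γ : ℝ) + (δ : ℝ) * Real.sqrt p) / ((α : ℝ) + (β : ℝ) * Real.sqrt p)
        = (a : ℝ) + (b : ℝ) * Real.sqrt p →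
      ((α : ℝ) * γ * A + (α : ℝ) * δ * B + (β : ℝ) * γ * B + (β : ℝ) * δ * C ≠ 0 ∧
       (0 < (α : ℝ) * γ * A + (α : ℝ) * δ * B + (β : ℝ) * γ * B + (β : ℝ) * δ * C ↔
        0 < f * a - e * b)) := by
  intro α β γ δ hpos hratio
  have hpR : (0:ℝ) < (p:ℝ) := by exact_mod_cast hp
  have hsq : Real.sqrt p * Real.sqrt p = (p:ℝ) := Real.mul_self_sqrt hpR.le
  have hsp : 0 < Real.sqrt p := Real.sqrt_pos.mpr hpR
  have hbR : (b:ℝ) ≠ 0 := by exact_mod_cast hb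
  -- separation lemma
  have key : ∀ x y : ℚ, (x:ℝ) + (y:ℝ) * Real.sqrt p = 0 → x = 0 ∧ y = 0 := by
    intro x y h
    by_cases hy : y = 0
    · refine ⟨?_, hy⟩
      rw [hy] at h
      push_cast at h
      have hx0 : (x:ℝ) = 0 := by linarith
      exact_mod_cast hx0
    · exfalso
      apply hirr
      refine ⟨-x / y, ?_⟩
      have hyR : (y:ℝ) ≠ 0 := by exact_mod_cast hy
      push_cast
      field_simp
      linear_combination -h
  rw [div_eq_iff (ne_of_gt hpos)] at hratio
  have hexp : ((γ - (a*α + p*b*β) : ℚ) : ℝ) + ((δ - (a*β + b*α) : ℚ) : ℝ) * Real.sqrt p = 0 := by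
    push_cast
    linear_combination hratio + (b:ℝ)*(β:ℝ)*hsq
  obtain ⟨h1, h2⟩ := key _ _ hexp
  have hγ : γ = a*α + p*b*β := sub_eq_zero.mp h1
  have hδ : δ = a*β + b*α := sub_eq_zero.mp h2
  -- key rational inequalities
  have hGP : 0 < (f^2*a^2 - e^2*b^2)*(a^2 - p*b^2) ∧ f*a - e*b ≠ 0 := by
    obtain ⟨hba, hcond⟩ | ⟨hba, hcond⟩ := hcase
    · -- case (a)
      have haR : 0 < (a:ℝ) := by linarith
      have haq : 0 < a := by exact_mod_cast haR
      have hprod : ((a:ℝ) + b*Real.sqrt p)*((a:ℝ) - b*Real.sqrt p) = (a:ℝ)^2 - p*b^2 := by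
        linear_combination (-(b:ℝ)^2) * hsq
      have ha2R : (0:ℝ) < (a:ℝ)^2 - p*b^2 := hprod ▸ mul_pos hab hba
      have ha2 : p*b^2 < a^2 := by
        have : ((p*b^2 : ℚ):ℝ) < ((a^2 : ℚ):ℝ) := by push_cast; linarith
        exact_mod_cast this
      have hba0 : 0 ≤ |b|/a := div_nonneg (abs_nonneg b) haq.le
      have he : 0 < e := by
        by_contra h
        push_neg at h
        have h3 : |f|/e ≤ 0 := div_nonpos_iff.mpr (Or.inl ⟨abs_nonneg f, h⟩)
        linarith [lt_of_le_of_lt hba0 hcond]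
      have habs : (|b|) * e < (|f|) * a := (div_lt_div_iff₀ haq he).mp hcond
      have h1' : |b*e| < |f*a| := by
        rwa [abs_mul, abs_mul, abs_of_pos he, abs_of_pos haq]
      have h2' : |b*e|^2 < |f*a|^2 := by
        have := mul_self_lt_mul_self (abs_nonneg (b*e)) h1'
        nlinarith [this]
      rw [sq_abs, sq_abs] at h2'
      have hfe : e^2*b^2 < f^2*a^2 := by nlinarith [h2']
      refine ⟨mul_pos (by linarith) (by linarith), ?_⟩
      intro h
      have heq2 : f^2*a^2 = e^2*b^2 := by linear_combination (f*a+e*b)*h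
      linarith
    · -- case (b)
      have hbs : 0 < (b:ℝ)*Real.sqrt p := by linarith
      have hbq : 0 < b := by
        rcases lt_trichotomy b 0 with h|h|h
        · exfalso
          have hbR' : (b:ℝ) < 0 := by exact_mod_cast h
          nlinarith [mul_neg_of_neg_of_pos hbR' hsp]
        · exact absurd h hb
        · exact h
      have hprod : ((a:ℝ) + b*Real.sqrt p)*((a:ℝ) - b*Real.sqrt p) = (a:ℝ)^2 - p*b^2 := by
        linear_combination (-(b:ℝ)^2) * hsq
      have ha2R : (a:ℝ)^2 - p*b^2 < 0 := hprod ▸ mul_neg_of_pos_of_neg hab hba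
      have ha2 : a^2 < p*b^2 := by
        have : ((a^2 : ℚ):ℝ) < ((p*b^2 : ℚ):ℝ) := by push_cast; linarith
        exact_mod_cast this
      have hab0 : 0 ≤ |a|/b := div_nonneg (abs_nonneg a) hbq.le
      have hf : 0 < f := by
        by_contra h
        push_neg at h
        have h3 : |e|/f ≤ 0 := div_nonpos_iff.mpr (Or.inl ⟨abs_nonneg e, h⟩)
        linarith [lt_of_le_of_lt hab0 hcond]
      have habs : (|a|) * f < (|e|) * b := (div_lt_div_iff₀ hbq hf).mp hcond
      have h1' : |a*f| < |e*b| := by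
        rwa [abs_mul, abs_mul, abs_of_pos hf, abs_of_pos hbq]
      have h2' : |a*f|^2 < |e*b|^2 := by
        have := mul_self_lt_mul_self (abs_nonneg (a*f)) h1'
        nlinarith [this]
      rw [sq_abs, sq_abs] at h2'
      have hfe : f^2*a^2 < e^2*b^2 := by nlinarith [h2']
      refine ⟨mul_pos_of_neg_of_neg (by linarith) (by linarith), ?_⟩
      intro h
      have heq2 : f^2*a^2 = e^2*b^2 := by linear_combination (f*a+e*b)*h
      linarith
  obtain ⟨hG, hP⟩ := hGP
  -- rational value of the ABC-area
  set S : ℚ := α*γ*f + α*δ*(-e) + β*γ*(-e) + β*δ*(2*f*a^2/b^2 - p*f) with hSdef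
  have hrealS : (α:ℝ)*γ*A + (α:ℝ)*δ*B + (β:ℝ)*γ*B + (β:ℝ)*δ*C = (S:ℝ) := by
    rw [hA, hB, hC, hSdef]
    push_cast
    ring
  have hne : ¬ (α = 0 ∧ β = 0) := by
    rintro ⟨hh1, hh2⟩
    rw [hh1, hh2] at hpos
    push_cast at hpos
    simp at hpos
  have hid : 4*(f*a - e*b)*(b^2*S) =
      (2*(f*a-e*b)*(b*α + a*β))^2 + 4*((f^2*a^2 - e^2*b^2)*(a^2 - p*b^2))*β^2 := by
    rw [hSdef, hγ, hδ]
    field_simp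
    ring
  have hmain : 0 < 4*(f*a - e*b)*(b^2*S) := by
    rw [hid]
    rcases eq_or_ne β 0 with hβ | hβ
    · subst hβ
      have hα : α ≠ 0 := fun h => hne ⟨h, rfl⟩
      have hx : 2*(f*a-e*b)*(b*α + a*0) ≠ 0 := by
        simp only [mul_zero, add_zero]
        exact mul_ne_zero (mul_ne_zero two_ne_zero hP) (mul_ne_zero hb hα)
      have h1' : 0 < (2*(f*a-e*b)*(b*α + a*0))^2 :=
        lt_of_le_of_ne (sq_nonneg _) (Ne.symm (pow_ne_zero 2 hx))
      linarith [h1']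
    · have h1' : 0 < 4*((f^2*a^2 - e^2*b^2)*(a^2 - p*b^2))*β^2 := by
        have := mul_pos (by linarith : (0:ℚ) < 4*((f^2*a^2 - e^2*b^2)*(a^2 - p*b^2)))
          (by positivity : (0:ℚ) < β^2)
        linarith [this]
      linarith [sq_nonneg (2*(f*a-e*b)*(b*α + a*β)), h1']
  have hb2 : (0:ℚ) < b^2 := by positivity
  rw [hrealS]
  constructor
  · intro h
    have hS0 : S = 0 := by exact_mod_cast h
    rw [hS0] at hmain
    simp at hmain
  · constructor
    · intro h
      have hSq : 0 < S := by exact_mod_cast h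
      nlinarith [hmain, mul_pos hb2 hSq]
    · intro h
      have hSq : 0 < S := by nlinarith [hmain, mul_pos h hb2]
      exact_mod_cast hSq
end

section
/- Under the hypotheses: a, b, e, f, p ∈ ℚ, √p ∉ ℚ, and either (a) a - b√p > 0, a + b√p > 0, e > 0, |f|/e > |b|/a, or (b) a - b√p < 0, a + b√p > 0, f > 0, |e|/f > |a|/b, the quantity D/4 := (a² - pb²)(e² - f²a²/b²) is strictly negative. -/
/-- Under condition (a) or (b), the quarter-discriminant
(a² - pb²)(e² - f²a²/b²) is strictly negative. -/
theorem quarter_discriminant_neg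
    (a b e f p : ℚ) (hp : 0 < p) (hirr : Irrational (Real.sqrt p)) (hb : b ≠ 0)
    (hcase :
      ((a : ℝ) - (b : ℝ) * Real.sqrt p > 0 ∧ (a : ℝ) + (b : ℝ) * Real.sqrt p > 0
        ∧ 0 < e ∧ |f| / e > |b| / a) ∨
      ((a : ℝ) - (b : ℝ) * Real.sqrt p < 0 ∧ (a : ℝ) + (b : ℝ) * Real.sqrt p > 0
        ∧ 0 < f ∧ |e| / f > |a| / b)) :
    (a ^ 2 - p * b ^ 2) * (e ^ 2 - f ^ 2 * a ^ 2 / b ^ 2) < 0 := by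
  have hb2 : (0:ℚ) < b ^ 2 := by positivity
  have hsq : Real.sqrt (p:ℝ) ^ 2 = (p:ℝ) := Real.sq_sqrt (by exact_mod_cast hp.le)
  rcases hcase with ⟨h1, h2, he, hfe⟩ | ⟨h1, h2, hf, hef⟩
  · have ha : (0:ℚ) < a := by
      have : (0:ℝ) < (a:ℝ) := by nlinarith
      exact_mod_cast this
    have key1 : (0:ℚ) < a ^ 2 - p * b ^ 2 := by
      have : (0:ℝ) < (a:ℝ)^2 - (p:ℝ) * (b:ℝ)^2 := by nlinarith [mul_pos h1 h2]
      have := this; push_cast at this; exact_mod_cast this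
    have h3 : |b| * e < |f| * a := by
      exact (div_lt_div_iff₀ ha he).mp hfe
    have h4 : b ^ 2 * e ^ 2 < f ^ 2 * a ^ 2 := by
      nlinarith [abs_nonneg b, abs_nonneg f, sq_abs b, sq_abs f, mul_nonneg (abs_nonneg b) he.le]
    have key2 : e ^ 2 - f ^ 2 * a ^ 2 / b ^ 2 < 0 := by
      rw [sub_neg, lt_div_iff₀ hb2]; linarith
    exact mul_neg_of_pos_of_neg key1 key2
  · have hbpos : (0:ℚ) < b := by
      have hsp : (0:ℝ) < Real.sqrt p := Real.sqrt_pos.mpr (by exact_mod_cast hp)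
      have : (0:ℝ) < (b:ℝ) := by
        rcases lt_trichotomy (b:ℝ) 0 with h | h | h
        · nlinarith
        · exact absurd h (by exact_mod_cast hb)
        · exact h
      exact_mod_cast this
    have key1 : a ^ 2 - p * b ^ 2 < 0 := by
      have : (a:ℝ)^2 - (p:ℝ) * (b:ℝ)^2 < 0 := by nlinarith [mul_neg_of_neg_of_pos h1 h2]
      push_cast at this; exact_mod_cast this
    have h3 : |a| * f < |e| * b := by
      exact (div_lt_div_iff₀ hbpos hf).mp hef
    have h4 : a ^ 2 * f ^ 2 < e ^ 2 * b ^ 2 := by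
      nlinarith [abs_nonneg a, abs_nonneg e, sq_abs a, sq_abs e, mul_nonneg (abs_nonneg a) hf.le]
    have key2 : 0 < e ^ 2 - f ^ 2 * a ^ 2 / b ^ 2 := by
      rw [sub_pos, div_lt_iff₀ hb2]; linarith
    exact mul_neg_of_neg_of_pos key1 key2
end

section
/- Let a, b, e, f ∈ ℚ with fa - eb ≠ 0 and suppose the discriminant condition (a² - pb²)(e² - f²a²/b²) < 0 holds (where b ≠ 0, p ∈ ℚ, p > 0). Then the quadratic Q(t) = (fa - eb)t² + 2(fa²/b - ea)t + (2fa³/b² - pfa - peb) has no real roots; in particular Q(t) has constant sign equal to the sign of fa - eb for all real t. -/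
/-- If fa - eb ≠ 0 and (a² - pb²)(e² - f²a²/b²) < 0, then the quadratic
Q(t) = (fa - eb)t² + 2(fa²/b - ea)t + (2fa³/b² - pfa - peb) has no real roots,
and has constant sign equal to the sign of fa - eb. -/
theorem quadratic_no_real_roots
    (a b e f p : ℚ) (hp : 0 < p) (hb : b ≠ 0)
    (hlead : f * a - e * b ≠ 0)
    (hdisc : (a ^ 2 - p * b ^ 2) * (e ^ 2 - f ^ 2 * a ^ 2 / b ^ 2) < 0) :
    ∀ t : ℝ,
      ((f * a - e * b : ℚ) : ℝ) * t ^ 2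
        + 2 * ((f * a ^ 2 / b - e * a : ℚ) : ℝ) * t
        + ((2 * f * a ^ 3 / b ^ 2 - p * f * a - p * e * b : ℚ) : ℝ) ≠ 0 ∧
      (0 < ((f * a - e * b : ℚ) : ℝ) * t ^ 2
        + 2 * ((f * a ^ 2 / b - e * a : ℚ) : ℝ) * t
        + ((2 * f * a ^ 3 / b ^ 2 - p * f * a - p * e * b : ℚ) : ℝ) ↔
       0 < f * a - e * b) := by
  intro t
  -- key identity: L*C - B² = -((a²-pb²)(e²-f²a²/b²)) > 0
  have hqid : (f * a - e * b) * (2 * f * a ^ 3 / b ^ 2 - p * f * a - p * e * b)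
      - (f * a ^ 2 / b - e * a) ^ 2
      = -((a ^ 2 - p * b ^ 2) * (e ^ 2 - f ^ 2 * a ^ 2 / b ^ 2)) := by
    field_simp
    ring
  have hqpos : 0 < (f * a - e * b) * (2 * f * a ^ 3 / b ^ 2 - p * f * a - p * e * b)
      - (f * a ^ 2 / b - e * a) ^ 2 := by
    rw [hqid]; linarith
  set L : ℝ := ((f * a - e * b : ℚ) : ℝ) with hL
  set B : ℝ := ((f * a ^ 2 / b - e * a : ℚ) : ℝ) with hB
  set C : ℝ := ((2 * f * a ^ 3 / b ^ 2 - p * f * a - p * e * b : ℚ) : ℝ) with hC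
  have hLC : 0 < L * C - B ^ 2 := by
    have := hqpos
    rw [hL, hB, hC]
    have h := (Rat.cast_pos (K := ℝ)).mpr this
    push_cast at h ⊢
    linarith
  have hLne : L ≠ 0 := by
    rw [hL]
    exact_mod_cast hlead
  have hLQ : 0 < L * (L * t ^ 2 + 2 * B * t + C) := by
    have h1 : L * (L * t ^ 2 + 2 * B * t + C) = (L * t + B) ^ 2 + (L * C - B ^ 2) := by
      ring
    rw [h1]
    positivity
  constructor
  · intro h0
    rw [h0, mul_zero] at hLQ
    exact lt_irrefl 0 hLQ
  · constructor
    · intro hQ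
      have : (0:ℝ) < (f * a - e * b : ℚ) := by
        rcases lt_or_gt_of_ne hLne with hneg | hpos
        · exfalso; nlinarith
        · exact hpos
      exact_mod_cast this
    · intro hLq
      have hLpos : 0 < L := by rw [hL]; exact_mod_cast hLq
      nlinarith
end
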